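/- Let k ≥ 2 be an integer, let T ≥ e and N ≥ 1 be reals, and let c_2, …, c_k > 0. Let H = (V, E_2 ∪ … ∪ E_k) be a linear hypergraph with |V| ≤ N such that for every vertex v ∈ V and every i ∈ {2, …, k}, the number d_i(v) of size-i edges containing v satisfies d_i(v) ≤ k·c_i·T^{i−1}·(ln T)^{(k−i)/(k−1)}. Then for all integers 2 ≤ g ≤ h ≤ i ≤ k, the number of 3-cycles {E_1, E_2, E_3} in H with |E_1| = g, |E_2| = h, |E_3| = i is less than N·k^4·c_g·c_h·T^{g+h−2}·(ln T)^2. -/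

import Mathlib

/-- A `j`-cycle in the hypergraph with edge set `E`: pairwise distinct edges
`e 0, …, e (j-1)` and pairwise distinct vertices `v 0, …, v (j-1)` with
`v i ∈ e i ∩ e (i+1)` (cyclically). -/
def HasCycle {V : Type*} [DecidableEq V] (E : Finset (Finset V)) (j : ℕ) : Prop :=
  ∃ (e : ZMod j → Finset V) (v : ZMod j → V),
    Function.Injective e ∧ Function.Injective v ∧
    (∀ i, e i ∈ E) ∧ (∀ i, v i ∈ e i ∧ v i ∈ e (i + 1))

/-- A hypergraph is linear if it has no 2-cycles. -/
def Linear {V : Type*} [DecidableEq V] (E : Finset (Finset V)) : Prop :=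
  ¬ HasCycle E 2

/-- Three pairwise distinct edges forming a 3-cycle: there are pairwise distinct vertices
`v₁ ∈ e₁ ∩ e₂`, `v₂ ∈ e₂ ∩ e₃`, `v₃ ∈ e₃ ∩ e₁`. -/
def IsCycle3 {V : Type*} [DecidableEq V] (e₁ e₂ e₃ : Finset V) : Prop :=
  e₁ ≠ e₂ ∧ e₁ ≠ e₃ ∧ e₂ ≠ e₃ ∧
  ∃ v₁ v₂ v₃ : V, v₁ ≠ v₂ ∧ v₁ ≠ v₃ ∧ v₂ ≠ v₃ ∧
    v₁ ∈ e₁ ∩ e₂ ∧ v₂ ∈ e₂ ∩ e₃ ∧ v₃ ∈ e₃ ∩ e₁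

/-- Counting 3-cycles with prescribed edge sizes in a linear hypergraph with bounded
degrees. -/
theorem stmt14 {α : Type*} [DecidableEq α] (k : ℕ) (hk : 2 ≤ k) (T N : ℝ)
    (hT : Real.exp 1 ≤ T) (hN : 1 ≤ N)
    (c : ℕ → ℝ) (hc : ∀ i : ℕ, 2 ≤ i → i ≤ k → 0 < c i)
    (V : Finset α) (hVN : (V.card : ℝ) ≤ N)
    (E : Finset (Finset α)) (hEV : ∀ e ∈ E, e ⊆ V)
    (hE : ∀ e ∈ E, 2 ≤ e.card ∧ e.card ≤ k)
    (hlin : Linear E)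
    (hdeg : ∀ v ∈ V, ∀ i : ℕ, 2 ≤ i → i ≤ k →
      ((E.filter fun e => e.card = i ∧ v ∈ e).card : ℝ) ≤
        (k : ℝ) * c i * T ^ (i - 1) * Real.log T ^ (((k : ℝ) - i) / ((k : ℝ) - 1)))
    (g h i : ℕ) (hg : 2 ≤ g) (hgh : g ≤ h) (hhi : h ≤ i) (hik : i ≤ k) :
    (Set.ncard {s : Finset (Finset α) | ∃ e₁ e₂ e₃ : Finset α,
        s = {e₁, e₂, e₃} ∧ e₁ ∈ E ∧ e₂ ∈ E ∧ e₃ ∈ E ∧ IsCycle3 e₁ e₂ e₃ ∧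
        e₁.card = g ∧ e₂.card = h ∧ e₃.card = i} : ℝ) <
      N * (k : ℝ) ^ 4 * c g * c h * T ^ (g + h - 2) * Real.log T ^ 2 := by
  classical
  have hgk : g ≤ k := hgh.trans (hhi.trans hik)
  have hhk : h ≤ k := hhi.trans hik
  have hh2 : 2 ≤ h := hg.trans hgh
  have hcg := hc g hg hgk
  have hch := hc h hh2 hhk
  have hT0 : (0:ℝ) < T := lt_of_lt_of_le (Real.exp_pos 1) hT
  have hL1 : (1:ℝ) ≤ Real.log T := by
    have := Real.log_le_log (Real.exp_pos 1) hT
    simpa using this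
  have hL0 : (0:ℝ) < Real.log T := lt_of_lt_of_le one_pos hL1
  have hk2 : (2:ℝ) ≤ (k:ℝ) := by exact_mod_cast hk
  -- linearity: two distinct edges share at most one vertex
  have hlin' : ∀ e ∈ E, ∀ e' ∈ E, e ≠ e' → ∀ u w : α, u ≠ w →
      u ∈ e → u ∈ e' → w ∈ e → w ∈ e' → False := by
    intro e he e' he' hne u w huw hue hue' hwe hwe'
    apply hlin
    have h2 : ∀ x : ZMod 2, x = 0 ∨ x = 1 := by decide
    have h10 : (1 : ZMod 2) ≠ 0 := by decide
    have h01 : (0 : ZMod 2) + 1 = 1 := by decide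
    have h11 : (1 : ZMod 2) + 1 = 0 := by decide
    refine ⟨fun j => if j = 0 then e else e', fun j => if j = 0 then u else w, ?_, ?_, ?_, ?_⟩
    · intro a b hab
      rcases h2 a with ha | ha <;> rcases h2 b with hb | hb <;> subst ha <;> subst hb <;>
        simp_all
    · intro a b hab
      rcases h2 a with ha | ha <;> rcases h2 b with hb | hb <;> subst ha <;> subst hb <;>
        simp_all
    · intro j
      rcases h2 j with hj | hj <;> subst hj <;> simp [h10, he, he']
    · intro j
      rcases h2 j with hj | hj <;> subst hj
      · simp [h01, h10, hue, hue']
      · simp [h11, h10, hwe, hwe']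
  -- the set of 3-cycles as a finset
  set S : Finset (Finset (Finset α)) := E.powerset.filter (fun s => ∃ e₁ e₂ e₃ : Finset α,
        s = {e₁, e₂, e₃} ∧ e₁ ∈ E ∧ e₂ ∈ E ∧ e₃ ∈ E ∧ IsCycle3 e₁ e₂ e₃ ∧
        e₁.card = g ∧ e₂.card = h ∧ e₃.card = i) with hS
  have hset : {s : Finset (Finset α) | ∃ e₁ e₂ e₃ : Finset α,
        s = {e₁, e₂, e₃} ∧ e₁ ∈ E ∧ e₂ ∈ E ∧ e₃ ∈ E ∧ IsCycle3 e₁ e₂ e₃ ∧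
        e₁.card = g ∧ e₂.card = h ∧ e₃.card = i} = ↑S := by
    ext s
    simp only [hS, Finset.coe_filter, Finset.mem_powerset, Set.mem_setOf_eq]
    constructor
    · rintro ⟨e₁, e₂, e₃, rfl, h1, h2, h3, rest⟩
      refine ⟨?_, e₁, e₂, e₃, rfl, h1, h2, h3, rest⟩
      intro x hx
      simp only [Finset.mem_insert, Finset.mem_singleton] at hx
      rcases hx with rfl | rfl | rfl <;> assumption
    · rintro ⟨-, hs⟩; exact hs
  rw [hset, Set.ncard_coe_finset]
  -- the counting sigma-finset
  set B := V.sigma (fun v => ((E.filter fun e => e.card = g ∧ v ∈ e) ×ˢ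
      (E.filter fun e => e.card = h ∧ v ∈ e)).sigma
      (fun p => (p.1.erase v) ×ˢ (p.2.erase v))) with hB
  have hcard : S.card ≤ B.card := by
    apply Finset.card_le_card_of_surjOn (fun b =>
      insert b.2.1.1 (insert b.2.1.2 (E.filter fun e => b.2.2.1 ∈ e ∧ b.2.2.2 ∈ e)))
    intro s hs
    simp only [Finset.coe_filter, Set.mem_setOf_eq, hS] at hs
    obtain ⟨-, e₁, e₂, e₃, rfl, he₁, he₂, he₃, ⟨hne12, hne13, hne23,
      v₁, v₂, v₃, hv12, hv13, hv23, hv₁, hv₂, hv₃⟩, hc₁, hc₂, hc₃⟩ := hs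
    simp only [Finset.mem_inter] at hv₁ hv₂ hv₃
    rw [Set.mem_image]
    refine ⟨⟨v₁, ⟨(e₁, e₂), (v₃, v₂)⟩⟩, ?_, ?_⟩
    · simp only [Finset.mem_coe, hB, Finset.mem_sigma,
        Finset.mem_product, Finset.mem_filter, Finset.mem_erase]
      exact ⟨hEV e₁ he₁ hv₁.1, ⟨⟨he₁, hc₁, hv₁.1⟩, ⟨he₂, hc₂, hv₁.2⟩⟩,
        ⟨hv13.symm, hv₃.2⟩, ⟨hv12.symm, hv₂.1⟩⟩
    · have hfil : E.filter (fun e => v₃ ∈ e ∧ v₂ ∈ e) = {e₃} := by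
        ext e
        simp only [Finset.mem_filter, Finset.mem_singleton]
        constructor
        · rintro ⟨he, hv3e, hv2e⟩
          by_contra hne
          exact hlin' e he e₃ he₃ hne v₃ v₂ hv23.symm hv3e hv₃.1 hv2e hv₂.2
        · rintro rfl
          exact ⟨he₃, hv₃.1, hv₂.2⟩
      simp only [hfil]
  -- computing the cardinality of B
  have hBcard : B.card = ∑ v ∈ V, (E.filter fun e => e.card = g ∧ v ∈ e).card *
      (E.filter fun e => e.card = h ∧ v ∈ e).card * ((g-1) * (h-1)) := by
    rw [hB, Finset.card_sigma]
    refine Finset.sum_congr rfl fun v hv => ?_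
    rw [Finset.card_sigma]
    rw [Finset.sum_congr rfl (fun p hp => ?_), Finset.sum_const, Finset.card_product,
      smul_eq_mul, mul_assoc]
    simp only [Finset.mem_product, Finset.mem_filter] at hp
    rw [Finset.card_product, Finset.card_erase_of_mem hp.1.2.2, Finset.card_erase_of_mem hp.2.2.2,
      hp.1.2.1, hp.2.2.1]
  -- real-number estimates
  set L := Real.log T with hLdef
  set Dg : ℝ := (k:ℝ) * c g * T ^ (g-1) * L ^ (((k:ℝ)-(g:ℝ))/((k:ℝ)-1)) with hDg
  set Dh : ℝ := (k:ℝ) * c h * T ^ (h-1) * L ^ (((k:ℝ)-(h:ℝ))/((k:ℝ)-1)) with hDh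
  have hDg0 : 0 < Dg := by
    rw [hDg]; positivity
  have hDh0 : 0 < Dh := by
    rw [hDh]; positivity
  have hsumbound : ((B.card : ℝ)) ≤ N * (Dg * Dh * ((k:ℝ)-1)^2) := by
    rw [hBcard]
    push_cast [Nat.cast_sub (show 1 ≤ g by omega), Nat.cast_sub (show 1 ≤ h by omega)]
    have hterm : ∀ v ∈ V, ((E.filter fun e => e.card = g ∧ v ∈ e).card : ℝ) *
        ((E.filter fun e => e.card = h ∧ v ∈ e).card : ℝ) * (((g:ℝ)-1) * ((h:ℝ)-1)) ≤
        Dg * Dh * ((k:ℝ)-1)^2 := by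
      intro v hv
      have h1 := hdeg v hv g hg hgk
      have h2 := hdeg v hv h hh2 hhk
      have hg1 : ((g:ℝ)-1) ≤ (k:ℝ)-1 := by
        have : (g:ℝ) ≤ (k:ℝ) := by exact_mod_cast hgk
        linarith
      have hh1 : ((h:ℝ)-1) ≤ (k:ℝ)-1 := by
        have : (h:ℝ) ≤ (k:ℝ) := by exact_mod_cast hhk
        linarith
      have hg0 : (0:ℝ) ≤ (g:ℝ)-1 := by
        have : (2:ℝ) ≤ (g:ℝ) := by exact_mod_cast hg
        linarith
      have hh0 : (0:ℝ) ≤ (h:ℝ)-1 := by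
        have : (2:ℝ) ≤ (h:ℝ) := by exact_mod_cast hh2
        linarith
      have hk1 : (0:ℝ) ≤ (k:ℝ)-1 := by linarith
      have hcard1 : (0:ℝ) ≤ ((E.filter fun e => e.card = g ∧ v ∈ e).card : ℝ) := by positivity
      have hcard2 : (0:ℝ) ≤ ((E.filter fun e => e.card = h ∧ v ∈ e).card : ℝ) := by positivity
      calc ((E.filter fun e => e.card = g ∧ v ∈ e).card : ℝ) *
            ((E.filter fun e => e.card = h ∧ v ∈ e).card : ℝ) * (((g:ℝ)-1) * ((h:ℝ)-1))
          ≤ Dg * Dh * (((k:ℝ)-1) * ((k:ℝ)-1)) := by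
            apply mul_le_mul
            · exact mul_le_mul h1 h2 hcard2 hDg0.le
            · exact mul_le_mul hg1 hh1 hh0 hk1
            · positivity
            · positivity
        _ = Dg * Dh * ((k:ℝ)-1)^2 := by ring
    calc ∑ v ∈ V, ((E.filter fun e => e.card = g ∧ v ∈ e).card : ℝ) *
          ((E.filter fun e => e.card = h ∧ v ∈ e).card : ℝ) * (((g:ℝ)-1) * ((h:ℝ)-1))
        ≤ ∑ _v ∈ V, Dg * Dh * ((k:ℝ)-1)^2 := Finset.sum_le_sum hterm
      _ = (V.card : ℝ) * (Dg * Dh * ((k:ℝ)-1)^2) := by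
          rw [Finset.sum_const, nsmul_eq_mul]
      _ ≤ N * (Dg * Dh * ((k:ℝ)-1)^2) := by
          apply mul_le_mul_of_nonneg_right hVN
          positivity
  -- final strict inequality
  have hfin : N * (Dg * Dh * ((k:ℝ)-1)^2) <
      N * (k:ℝ)^4 * c g * c h * T ^ (g + h - 2) * L ^ 2 := by
    have hk1 : (0:ℝ) < (k:ℝ)-1 := by linarith
    have hβ : (((k:ℝ)-(g:ℝ))/((k:ℝ)-1)) + (((k:ℝ)-(h:ℝ))/((k:ℝ)-1)) ≤ 2 := by
      rw [← add_div, div_le_iff₀ hk1]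
      have hg' : (2:ℝ) ≤ (g:ℝ) := by exact_mod_cast hg
      have hh' : (2:ℝ) ≤ (h:ℝ) := by exact_mod_cast hh2
      linarith
    have hLpow : L ^ ((((k:ℝ)-(g:ℝ))/((k:ℝ)-1)) + (((k:ℝ)-(h:ℝ))/((k:ℝ)-1))) ≤ L ^ (2:ℕ) := by
      have h1 : L ^ ((((k:ℝ)-(g:ℝ))/((k:ℝ)-1)) + (((k:ℝ)-(h:ℝ))/((k:ℝ)-1))) ≤
          L ^ ((2:ℕ) : ℝ) := Real.rpow_le_rpow_of_exponent_le hL1 (by push_cast; exact hβ)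
      rwa [Real.rpow_natCast] at h1
    have hTpow : T ^ (g-1) * T ^ (h-1) = T ^ (g+h-2) := by
      rw [← pow_add]
      congr 1
      omega
    have hDgDh : Dg * Dh = (k:ℝ)^2 * (c g * c h) * T ^ (g+h-2) *
        L ^ ((((k:ℝ)-(g:ℝ))/((k:ℝ)-1)) + (((k:ℝ)-(h:ℝ))/((k:ℝ)-1))) := by
      rw [hDg, hDh, Real.rpow_add hL0, ← hTpow]
      ring
    rw [hDgDh]
    have hksq : (k:ℝ)^2 * ((k:ℝ)-1)^2 < (k:ℝ)^4 := by nlinarith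
    have hC : (0:ℝ) < N * (c g * c h) * T ^ (g+h-2) := by positivity
    calc N * ((k:ℝ)^2 * (c g * c h) * T ^ (g+h-2) *
          L ^ ((((k:ℝ)-(g:ℝ))/((k:ℝ)-1)) + (((k:ℝ)-(h:ℝ))/((k:ℝ)-1))) * ((k:ℝ)-1)^2)
        = (N * (c g * c h) * T ^ (g+h-2)) * ((k:ℝ)^2 * ((k:ℝ)-1)^2) *
          L ^ ((((k:ℝ)-(g:ℝ))/((k:ℝ)-1)) + (((k:ℝ)-(h:ℝ))/((k:ℝ)-1))) := by ring
      _ ≤ (N * (c g * c h) * T ^ (g+h-2)) * ((k:ℝ)^2 * ((k:ℝ)-1)^2) * L ^ (2:ℕ) := by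
          apply mul_le_mul_of_nonneg_left hLpow
          positivity
      _ < (N * (c g * c h) * T ^ (g+h-2)) * (k:ℝ)^4 * L ^ (2:ℕ) := by
          apply mul_lt_mul_of_pos_right _ (by positivity)
          exact mul_lt_mul_of_pos_left hksq hC
      _ = N * (k:ℝ)^4 * c g * c h * T ^ (g + h - 2) * L ^ 2 := by ring
  calc (S.card : ℝ) ≤ (B.card : ℝ) := by exact_mod_cast hcard
    _ ≤ N * (Dg * Dh * ((k:ℝ)-1)^2) := hsumbound
    _ < N * (k:ℝ)^4 * c g * c h * T ^ (g + h - 2) * L ^ 2 := hfin
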